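/- Suppose each D_i : ℝ^J → ℝ ∪ {−∞} is concave and upper semicontinuous and there is ε > 0 such that v(z) := sup{∑_i D_i(x_i) : ∑_i x_i = z} is finite for all z ∈ ℝ^J with ‖z‖ ≤ ε (Assumption S). Then a feasible point x̄ ∈ (ℝ^J)^I with ∑_{i∈I} x̄_i = 0 attains the supremum v(0) if and only if there exists a price vector p ∈ ℝ^J such that p is a supergradient of D_i at x̄_i for every i ∈ I. -/

import Mathlib

open scoped BigOperators
open Metric Filter

noncomputable section

/-- The inner product `p·y = ∑ j, p j * y j`. -/
def dotp {J : Type*} [Fintype J] (p y : EuclideanSpace ℝ J) : ℝ := ∑ j, p j * y j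

/-- A function `u : ℝ^J → ℝ ∪ {±∞}` is concave iff its hypograph is convex. -/
def HypoConcave {J : Type*} [Fintype J] (u : EuclideanSpace ℝ J → EReal) : Prop :=
  Convex ℝ {q : EuclideanSpace ℝ J × ℝ | (q.2 : EReal) ≤ u q.1}

/-- Indifference price function `D(x) = sup {r ∈ ℝ : u(x⁰ + x − r·g) ≥ u(x⁰)}`,
the supremum being taken in `ℝ ∪ {±∞}`. -/
def indiff {J : Type*} [Fintype J] (u : EuclideanSpace ℝ J → EReal)
    (x0 g x : EuclideanSpace ℝ J) : EReal :=
  sSup {e : EReal | ∃ r : ℝ, e = (r : EReal) ∧ u x0 ≤ u (x0 + x - r • g)}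

/-- `p` is a supergradient of `D` at `xb`: `D xb` is finite and
`D x ≤ D xb + p·(x − xb)` for all `x`. -/
def IsSupergradient {J : Type*} [Fintype J] (D : EuclideanSpace ℝ J → EReal)
    (p xb : EuclideanSpace ℝ J) : Prop :=
  D xb ≠ ⊥ ∧ D xb ≠ ⊤ ∧ ∀ x, D x ≤ D xb + ((dotp p (x - xb) : ℝ) : EReal)

/-- Optimal value `v(z)` of the perturbed market clearing problem `(P_z)`. -/
def marketValue {I J : Type*} [Fintype I] [Fintype J]
    (D : I → EuclideanSpace ℝ J → EReal) (z : EuclideanSpace ℝ J) : EReal :=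
  sSup {e : EReal | ∃ x : I → EuclideanSpace ℝ J, (∑ i, x i) = z ∧ e = ∑ i, D i (x i)}

/-- Optimal value of problem `(P')`, the total consumer surplus at allocation `w`. -/
def CSval {I J : Type*} [Fintype I] [Fintype J]
    (u : I → EuclideanSpace ℝ J → EReal) (g : EuclideanSpace ℝ J)
    (w : I → EuclideanSpace ℝ J) : EReal :=
  sSup {e : EReal | ∃ s : ℝ, e = (s : EReal) ∧ ∃ z : I → EuclideanSpace ℝ J,
    (∑ i, z i) + s • g = ∑ i, w i ∧ ∀ i, u i (w i) ≤ u i (z i)}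

/-- Recession function `u^∞(y) = inf_{α>0} (u(x⁰ + α·y) − u(x⁰))/α`. -/
def recession {J : Type*} [Fintype J] (u : EuclideanSpace ℝ J → EReal)
    (x0 y : EuclideanSpace ℝ J) : EReal :=
  sInf {e : EReal | ∃ α : ℝ, 0 < α ∧ e = (u (x0 + α • y) - u x0) / (α : EReal)}

/-- Pareto efficiency of an allocation `x` with total endowment `∑ i, x i`. -/
def ParetoEfficient {I J : Type*} [Fintype I] [Fintype J]
    (u : I → EuclideanSpace ℝ J → EReal) (x : I → EuclideanSpace ℝ J) : Prop :=
  ¬ ∃ x' : I → EuclideanSpace ℝ J, (∑ i, x' i) = (∑ i, x i) ∧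
      (∀ i, u i (x i) ≤ u i (x' i)) ∧ ∃ i, u i (x i) < u i (x' i)

set_option maxHeartbeats 1000000

section Aux

variable {I J : Type*} [Fintype I] [Fintype J]


variable {I J : Type*} [Fintype I] [Fintype J]

lemma coe_sumE (s : Finset I) (r : I → ℝ) :
    ((∑ i ∈ s, r i : ℝ) : EReal) = ∑ i ∈ s, ((r i : ℝ) : EReal) :=
  map_sum (⟨⟨Real.toEReal, EReal.coe_zero⟩, EReal.coe_add⟩ : ℝ →+ EReal) r s

lemma sum_eq_bot_of_mem {f : I → EReal} {i0 : I} (h : f i0 = ⊥) : ∑ i, f i = ⊥ := by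
  classical
  rw [← Finset.add_sum_erase _ _ (Finset.mem_univ i0), h, EReal.bot_add]

lemma ne_bot_of_sum_ne_bot {f : I → EReal} (h : ∑ i, f i ≠ ⊥) (i : I) : f i ≠ ⊥ :=
  fun hb => h (sum_eq_bot_of_mem hb)

lemma sum_eq_coe_toReal {s : Finset I} {f : I → EReal} (htop : ∀ i ∈ s, f i ≠ ⊤)
    (hbot : ∀ i ∈ s, f i ≠ ⊥) :
    ∑ i ∈ s, f i = ((∑ i ∈ s, (f i).toReal : ℝ) : EReal) := by
  rw [coe_sumE]
  exact Finset.sum_congr rfl fun i hi => (EReal.coe_toReal (htop i hi) (hbot i hi)).symm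

lemma hypo_combo {u : EuclideanSpace ℝ J → EReal} (h : HypoConcave u)
    {x y : EuclideanSpace ℝ J} {r s a b : ℝ}
    (hr : (r : EReal) ≤ u x) (hs : (s : EReal) ≤ u y)
    (ha : 0 ≤ a) (hb : 0 ≤ b) (hab : a + b = 1) :
    ((a * r + b * s : ℝ) : EReal) ≤ u (a • x + b • y) := by
  have := h (show ((x, r) : EuclideanSpace ℝ J × ℝ) ∈ _ from hr)
    (show ((y, s) : EuclideanSpace ℝ J × ℝ) ∈ _ from hs) ha hb hab
  simpa [Prod.smul_mk, smul_eq_mul] using this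

lemma dotp_zero (p : EuclideanSpace ℝ J) : dotp p 0 = 0 := by
  simp [dotp, PiLp.zero_apply]

lemma dotp_sum {ι : Type*} (p : EuclideanSpace ℝ J) (s : Finset ι) (y : ι → EuclideanSpace ℝ J) :
    dotp p (∑ i ∈ s, y i) = ∑ i ∈ s, dotp p (y i) := by
  classical
  induction s using Finset.cons_induction with
  | empty => simp [dotp_zero]
  | cons i s hi ih =>
      rw [Finset.sum_cons, Finset.sum_cons, ← ih]
      simp [dotp, PiLp.add_apply, mul_add, Finset.sum_add_distrib]

end Aux

section Sep

variable {J : Type*} [Fintype J] [DecidableEq J] [Nonempty J]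

local notation "E" => EuclideanSpace ℝ J


lemma single_smul' (c : ℝ) (j : J) (a : ℝ) :
    c • EuclideanSpace.single j a = EuclideanSpace.single j (c * a) := by
  ext k
  simp [EuclideanSpace.single_apply, PiLp.smul_apply, mul_ite, smul_eq_mul]

lemma repr_sum' (z : E) : z = ∑ j, (z j) • EuclideanSpace.single j (1:ℝ) := by
  have h := (EuclideanSpace.basisFun J ℝ).sum_repr z
  simp only [EuclideanSpace.basisFun_apply, EuclideanSpace.basisFun_repr] at h
  exact h.symm

lemma repr_sum (z : E) : ∑ j, EuclideanSpace.single j (z j) = z := by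
  conv_rhs => rw [repr_sum' z]
  exact Finset.sum_congr rfl fun j _ => by rw [single_smul', mul_one]

lemma exists_price (C : Set (E × ℝ)) (hC : Convex ℝ C)
    (v0 : ℝ) (hb : ((0 : E), v0) ∉ C)
    (h0 : ((0 : E), v0 - 1) ∈ C)
    (h0' : ((0 : E), v0 - 2) ∈ C)
    {ε : ℝ} (hε : 0 < ε)
    (hball : ∀ z : E, ‖z‖ ≤ ε → ∃ t : ℝ, (z, t) ∈ C) :
    ∃ p : E, ∀ z t, (z, t) ∈ C → t ≤ v0 + dotp p z := by
  -- points near 0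
  have hnorm : ∀ j : J, ‖(EuclideanSpace.single j (ε/2) : E)‖ ≤ ε := by
    intro j
    rw [EuclideanSpace.norm_single, Real.norm_eq_abs, abs_of_pos (by linarith)]
    linarith
  choose tj htj using fun j : J => hball _ (hnorm j)
  -- affine span is top
  have hspan : affineSpan ℝ C = ⊤ := by
    rw [AffineSubspace.affineSpan_eq_top_iff_vectorSpan_eq_top_of_nonempty ℝ (E × ℝ) (E × ℝ)
      ⟨_, h0⟩]
    rw [Submodule.eq_top_iff']
    have h1 : ((0 : E), (1:ℝ)) ∈ vectorSpan ℝ C := by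
      have hv := vsub_mem_vectorSpan ℝ h0 h0'
      have heq : (((0:E), v0 - 1) -ᵥ ((0:E), v0 - 2) : E × ℝ) = ((0:E), (1:ℝ)) := by
        rw [vsub_eq_sub, Prod.sub_def]
        norm_num
      rwa [heq] at hv
    have h2 : ∀ j : J, ((EuclideanSpace.single j (1:ℝ) : E), (0:ℝ)) ∈ vectorSpan ℝ C := by
      intro j
      have hv := vsub_mem_vectorSpan ℝ (htj j) h0
      simp only [vsub_eq_sub, Prod.sub_def, sub_zero] at hv
      have hv2 : ((EuclideanSpace.single j (ε/2) : E), (0:ℝ)) ∈ vectorSpan ℝ C := by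
        have hs := Submodule.sub_mem _ hv (Submodule.smul_mem _ (tj j - (v0 - 1)) h1)
        simpa [Prod.smul_mk, Prod.sub_def, smul_eq_mul] using hs
      have hs := Submodule.smul_mem _ (2/ε) hv2
      rw [Prod.smul_mk, single_smul'] at hs
      have heq : (2/ε) * (ε/2) = 1 := by field_simp
      rw [heq] at hs
      simpa [smul_eq_mul] using hs
    intro w
    obtain ⟨z, t⟩ := w
    have hz : ((z : E), (0:ℝ)) ∈ vectorSpan ℝ C := by
      have heq : ((z : E), (0:ℝ)) = ∑ j, (z j) • ((EuclideanSpace.single j (1:ℝ) : E), (0:ℝ)) := by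
        rw [Prod.ext_iff]
        constructor
        · rw [Prod.fst_sum]
          simp only [Prod.smul_mk]
          exact repr_sum' z
        · rw [Prod.snd_sum]
          simp [Prod.smul_mk]
      rw [heq]
      exact Submodule.sum_mem _ fun j _ => Submodule.smul_mem _ _ (h2 j)
    have heq : ((z, t) : E × ℝ) = (z, 0) + t • ((0:E), (1:ℝ)) := by
      simp [Prod.ext_iff, Prod.smul_mk, smul_eq_mul]
    rw [heq]
    exact Submodule.add_mem _ hz (Submodule.smul_mem _ _ h1)
  -- nonempty interior
  obtain ⟨u, hu⟩ : (interior C).Nonempty := by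
    rw [hC.interior_nonempty_iff_affineSpan_eq_top]; exact hspan
  -- separation
  obtain ⟨f, hf⟩ := geometric_hahn_banach_open_point (hC.interior) isOpen_interior
    (fun h => hb (interior_subset h))
  -- extend separation to all of C
  have hfC : ∀ a ∈ C, f a ≤ f ((0 : E), v0) := by
    intro a ha
    by_contra hlt
    push_neg at hlt
    set b : E × ℝ := ((0 : E), v0) with hbdef
    have key : ∀ lam : ℝ, 0 < lam → lam ≤ 1 → (1 - lam) * f a + lam * f u < f b := by
      intro lam hl hl1
      have hmem : (1 - lam) • a + lam • u ∈ interior C :=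
        hC.combo_closure_interior_mem_interior (subset_closure ha) hu (by linarith) hl (by ring)
      have := hf _ hmem
      simpa [map_add, map_smul, smul_eq_mul] using this
    set d : ℝ := f a - f u with hd
    rcases le_or_gt d 0 with hd0 | hd0
    · have := key (1/2) (by norm_num) (by norm_num)
      nlinarith
    · set lam : ℝ := min 1 ((f a - f b) / (2 * d)) with hlam
      have hl0 : 0 < lam := lt_min one_pos (div_pos (by linarith) (by linarith))
      have hl1 : lam ≤ 1 := min_le_left _ _
      have hld : lam * d ≤ (f a - f b) / 2 := by
        have hle : lam ≤ (f a - f b) / (2 * d) := min_le_right _ _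
        calc lam * d ≤ ((f a - f b) / (2 * d)) * d := by nlinarith
          _ = (f a - f b) / 2 := by field_simp
      have := key lam hl0 hl1
      nlinarith
  -- decompose f
  set c : ℝ := f ((0 : E), (1:ℝ)) with hc
  set g : E → ℝ := fun z => f (z, 0) with hg
  have hdecomp : ∀ z t, f ((z : E), t) = g z + t * c := by
    intro z t
    have heq : ((z, t) : E × ℝ) = (z, 0) + t • ((0:E), (1:ℝ)) := by
      simp [Prod.ext_iff, Prod.smul_mk, smul_eq_mul]
    rw [heq, map_add, map_smul, smul_eq_mul, hg, hc]
  have hg0 : g 0 = 0 := by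
    have heq : (((0:E), (0:ℝ)) : E × ℝ) = 0 := rfl
    rw [hg]; simp only [heq, map_zero]
  have hfb : f ((0 : E), v0) = v0 * c := by rw [hdecomp, hg0, zero_add]
  have hglin : ∀ (s : ℝ) (z : E), g (s • z) = s * g z := by
    intro s z
    have heq : ((s • z, (0:ℝ)) : E × ℝ) = s • (z, 0) := by
      simp [Prod.smul_mk, smul_eq_mul]
    rw [hg]; simp only [heq, map_smul, smul_eq_mul]
  -- c ≥ 0
  have hc0 : 0 ≤ c := by
    have := hfC _ h0
    rw [hdecomp, hg0, hfb, zero_add] at this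
    nlinarith
  -- c > 0
  have hcpos : 0 < c := by
    rcases hc0.lt_or_eq with h | h
    · exact h
    · exfalso
      have hgz : ∀ z : E, g z = 0 := by
        have hball0 : ∀ z : E, ‖z‖ ≤ ε → g z ≤ 0 := by
          intro z hz
          obtain ⟨t, ht⟩ := hball z hz
          have := hfC _ ht
          rw [hdecomp, hfb, ← h] at this
          linarith
        intro z
        set s : ℝ := ε / (‖z‖ + 1) with hs
        have hspos : 0 < s := by positivity
        have hsz : ‖s • z‖ ≤ ε := by
          rw [norm_smul, Real.norm_eq_abs, abs_of_pos hspos, hs]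
          rw [div_mul_eq_mul_div, div_le_iff₀ (by positivity)]
          nlinarith [norm_nonneg z]
        have h1 := hball0 _ hsz
        have h2 := hball0 (-(s • z)) (by rw [norm_neg]; exact hsz)
        have hneg : g (-(s • z)) = - g (s • z) := by
          have heq : (-(s•z) : E) = (-1 : ℝ) • (s • z) := by simp
          rw [heq, hglin]; ring
        rw [hglin] at h1
        rw [hneg, hglin] at h2
        nlinarith
      obtain ⟨uz, ut⟩ := u
      have := hf _ hu
      rw [hdecomp, hfb, ← h, hgz] at this
      linarith
  -- define price
  set p : E := (WithLp.equiv 2 (J → ℝ)).symm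
    (fun j => -(g (EuclideanSpace.single j 1)) / c) with hp
  have hpapply : ∀ j, p j = -(g (EuclideanSpace.single j 1)) / c := fun j => rfl
  have hgsum : ∀ z : E, g z = ∑ j, z j * g (EuclideanSpace.single j 1) := by
    intro z
    conv_lhs => rw [← repr_sum z]
    have hsum : g (∑ j, EuclideanSpace.single j (z j)) =
        ∑ j, g (EuclideanSpace.single j (z j)) := by
      rw [hg]
      have heq : ((∑ j, EuclideanSpace.single j (z j), (0:ℝ)) : E × ℝ)
          = ∑ j, ((EuclideanSpace.single j (z j) : E), (0:ℝ)) := by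
        rw [Prod.ext_iff]; constructor
        · rw [Prod.fst_sum]
        · rw [Prod.snd_sum]; simp
      simp only [heq, map_sum]
    rw [hsum]
    refine Finset.sum_congr rfl fun j _ => ?_
    have heq : EuclideanSpace.single j (z j) = (z j) • EuclideanSpace.single j (1:ℝ) := by
      rw [single_smul', mul_one]
    rw [heq, hglin]
  have hdotp : ∀ z : E, dotp p z = -(g z) / c := by
    intro z
    rw [dotp]
    calc ∑ j, p j * z j = ∑ j, -(z j * g (EuclideanSpace.single j 1)) / c :=
          Finset.sum_congr rfl fun j _ => by rw [hpapply]; ring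
      _ = (∑ j, -(z j * g (EuclideanSpace.single j 1))) / c := by rw [Finset.sum_div]
      _ = -(∑ j, z j * g (EuclideanSpace.single j 1)) / c := by
          rw [Finset.sum_neg_distrib]
      _ = -(g z) / c := by rw [← hgsum]
  refine ⟨p, fun z t hzt => ?_⟩
  have hle := hfC _ hzt
  rw [hdecomp, hfb] at hle
  rw [hdotp]
  have h2 : (t - v0) * c ≤ -(g z) := by nlinarith
  have h3 : t - v0 ≤ -(g z) / c := by
    rw [le_div_iff₀ hcpos]; exact h2
  linarith

end Sep

/-- optimality conditions for the market clearing problem (Theorem kkt). -/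
theorem market_clearing_optimality
    {I J : Type*} [Fintype I] [Nonempty I] [Fintype J] [Nonempty J]
    (D : I → EuclideanSpace ℝ J → EReal)
    (hconc : ∀ i, HypoConcave (D i))
    (husc : ∀ i, UpperSemicontinuous (D i))
    (hne_top : ∀ i x, D i x ≠ ⊤)
    (hS : ∃ ε : ℝ, 0 < ε ∧ ∀ z : EuclideanSpace ℝ J, ‖z‖ ≤ ε →
      marketValue D z ≠ ⊥ ∧ marketValue D z ≠ ⊤)
    (xb : I → EuclideanSpace ℝ J) (hfeas : (∑ i, xb i) = 0) :
    (∑ i, D i (xb i)) = marketValue D 0 ↔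
      ∃ p : EuclideanSpace ℝ J, ∀ i, IsSupergradient (D i) p (xb i) := by
  classical
  obtain ⟨ε, hε, hSe⟩ := hS
  have h0S := hSe 0 (by simp [hε.le])
  constructor
  · -- forward direction
    intro hopt
    have hsum_ne_bot : (∑ i, D i (xb i)) ≠ ⊥ := by rw [hopt]; exact h0S.1
    have hbot : ∀ i, D i (xb i) ≠ ⊥ := ne_bot_of_sum_ne_bot hsum_ne_bot
    set d : I → ℝ := fun i => (D i (xb i)).toReal with hd
    have hsum : (∑ i, D i (xb i)) = ((∑ i, d i : ℝ) : EReal) :=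
      sum_eq_coe_toReal (fun i _ => hne_top i _) (fun i _ => hbot i)
    set v0 : ℝ := ∑ i, d i with hv0
    have hval : marketValue D 0 = (v0 : EReal) := by rw [← hopt, hsum]
    set C : Set (EuclideanSpace ℝ J × ℝ) :=
      {q | ∃ x : I → EuclideanSpace ℝ J, (∑ i, x i) = q.1 ∧
        ((q.2 : ℝ) : EReal) < ∑ i, D i (x i)} with hCdef
    have key_fin : ∀ (x : I → EuclideanSpace ℝ J) (t : ℝ),
        ((t : ℝ) : EReal) < ∑ i, D i (x i) →
        (∀ i, D i (x i) ≠ ⊥) ∧ t < ∑ i, (D i (x i)).toReal := by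
      intro x t ht
      have hnb : (∑ i, D i (x i)) ≠ ⊥ := by
        intro h
        rw [h] at ht
        exact absurd ht (by simp)
      have hb := ne_bot_of_sum_ne_bot hnb
      refine ⟨hb, ?_⟩
      rw [sum_eq_coe_toReal (fun i _ => hne_top i _) (fun i _ => hb i)] at ht
      exact_mod_cast ht
    have hCconv : Convex ℝ C := by
      rintro ⟨z1, t1⟩ ⟨x, hx, hxv⟩ ⟨z2, t2⟩ ⟨y, hy, hyv⟩ a b ha hb hab
      rcases ha.eq_or_lt with haz | hap
      · have hb1 : b = 1 := by linarith
        have : a • ((z1, t1) : EuclideanSpace ℝ J × ℝ) + b • (z2, t2) = (z2, t2) := by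
          rw [← haz, hb1, zero_smul, one_smul, zero_add]
        rw [this]
        exact ⟨y, hy, hyv⟩
      rcases hb.eq_or_lt with hbz | hbp
      · have ha1 : a = 1 := by linarith
        have : a • ((z1, t1) : EuclideanSpace ℝ J × ℝ) + b • (z2, t2) = (z1, t1) := by
          rw [← hbz, ha1, zero_smul, one_smul, add_zero]
        rw [this]
        exact ⟨x, hx, hxv⟩
      obtain ⟨hbx, htx⟩ := key_fin x t1 hxv
      obtain ⟨hby, hty⟩ := key_fin y t2 hyv
      show ((a • z1 + b • z2, a * t1 + b * t2) : EuclideanSpace ℝ J × ℝ) ∈ C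
      refine ⟨fun i => a • x i + b • y i, ?_, ?_⟩
      · show (∑ i, (a • x i + b • y i)) = a • z1 + b • z2
        rw [Finset.sum_add_distrib, ← Finset.smul_sum, ← Finset.smul_sum, hx, hy]
      · show ((a * t1 + b * t2 : ℝ) : EReal) < ∑ i, D i (a • x i + b • y i)
        have hper : ∀ i, ((a * (D i (x i)).toReal + b * (D i (y i)).toReal : ℝ) : EReal)
            ≤ D i (a • x i + b • y i) := fun i =>
          hypo_combo (hconc i) (le_of_eq (EReal.coe_toReal (hne_top i _) (hbx i)))
            (le_of_eq (EReal.coe_toReal (hne_top i _) (hby i))) ha hb hab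
        calc ((a * t1 + b * t2 : ℝ) : EReal)
            < ((∑ i, (a * (D i (x i)).toReal + b * (D i (y i)).toReal) : ℝ) : EReal) := by
              apply EReal.coe_lt_coe_iff.mpr
              rw [Finset.sum_add_distrib, ← Finset.mul_sum, ← Finset.mul_sum]
              nlinarith
          _ = ∑ i, ((a * (D i (x i)).toReal + b * (D i (y i)).toReal : ℝ) : EReal) :=
              coe_sumE _ _
          _ ≤ ∑ i, D i (a • x i + b • y i) := Finset.sum_le_sum fun i _ => hper i
    have hbC : ((0 : EuclideanSpace ℝ J), v0) ∉ C := by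
      rintro ⟨x, hx, hv⟩
      have hle : (∑ i, D i (x i)) ≤ marketValue D 0 := le_sSup ⟨x, hx, rfl⟩
      rw [hval] at hle
      exact absurd (lt_of_lt_of_le hv hle) (lt_irrefl _)
    have h0C : ((0 : EuclideanSpace ℝ J), v0 - 1) ∈ C := by
      refine ⟨xb, hfeas, ?_⟩
      show ((v0 - 1 : ℝ) : EReal) < ∑ i, D i (xb i)
      rw [hsum]
      exact EReal.coe_lt_coe_iff.mpr (by linarith)
    have h0'C : ((0 : EuclideanSpace ℝ J), v0 - 2) ∈ C := by
      refine ⟨xb, hfeas, ?_⟩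
      show ((v0 - 2 : ℝ) : EReal) < ∑ i, D i (xb i)
      rw [hsum]
      exact EReal.coe_lt_coe_iff.mpr (by linarith)
    have hball' : ∀ z : EuclideanSpace ℝ J, ‖z‖ ≤ ε → ∃ t : ℝ, (z, t) ∈ C := by
      intro z hz
      obtain ⟨hzb, hzt⟩ := hSe z hz
      have hcoe : ((marketValue D z).toReal : EReal) = marketValue D z :=
        EReal.coe_toReal hzt hzb
      have hlt : (((marketValue D z).toReal - 1 : ℝ) : EReal) < marketValue D z := by
        conv_rhs => rw [← hcoe]
        exact EReal.coe_lt_coe_iff.mpr (by linarith)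
      rw [show marketValue D z = sSup {e : EReal | ∃ x : I → EuclideanSpace ℝ J,
        (∑ i, x i) = z ∧ e = ∑ i, D i (x i)} from rfl] at hlt
      obtain ⟨e, ⟨x, hx, rfl⟩, hlt'⟩ := lt_sSup_iff.mp hlt
      exact ⟨(marketValue D z).toReal - 1, x, hx, hlt'⟩
    obtain ⟨p, hkey⟩ := exists_price C hCconv v0 hbC h0C h0'C hε hball'
    have hvb : ∀ z : EuclideanSpace ℝ J,
        marketValue D z ≤ ((v0 + dotp p z : ℝ) : EReal) := by
      intro z
      apply sSup_le
      rintro e ⟨x, hx, rfl⟩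
      rcases eq_or_ne (∑ i, D i (x i)) ⊥ with hbt | hbt
      · rw [hbt]; exact bot_le
      · have hb := ne_bot_of_sum_ne_bot hbt
        rw [sum_eq_coe_toReal (fun i _ => hne_top i _) (fun i _ => hb i)]
        apply EReal.coe_le_coe_iff.mpr
        set r : ℝ := ∑ i, (D i (x i)).toReal with hr
        by_contra hlt
        push_neg at hlt
        have hmem : (z, (v0 + dotp p z + r) / 2) ∈ C := by
          refine ⟨x, hx, ?_⟩
          show (((v0 + dotp p z + r) / 2 : ℝ) : EReal) < ∑ i, D i (x i)
          rw [sum_eq_coe_toReal (fun i _ => hne_top i _) (fun i _ => hb i)]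
          exact EReal.coe_lt_coe_iff.mpr (by linarith)
        have := hkey z _ hmem
        linarith
    refine ⟨p, fun i => ⟨hbot i, hne_top i _, fun x => ?_⟩⟩
    rcases eq_or_ne (D i x) ⊥ with hxb | hxb
    · rw [hxb]; exact bot_le
    · set y : I → EuclideanSpace ℝ J := Function.update xb i x with hy
      have hysum : (∑ k, y k) = x - xb i := by
        rw [← Finset.add_sum_erase _ y (Finset.mem_univ i)]
        have h1 : y i = x := Function.update_self i x xb
        have h2 : ∑ k ∈ Finset.univ.erase i, y k = ∑ k ∈ Finset.univ.erase i, xb k :=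
          Finset.sum_congr rfl fun k hk =>
            Function.update_of_ne (Finset.mem_erase.mp hk).1 x xb
        have h3 : xb i + ∑ k ∈ Finset.univ.erase i, xb k = 0 := by
          rw [Finset.add_sum_erase _ xb (Finset.mem_univ i), hfeas]
        have h4 : ∑ k ∈ Finset.univ.erase i, xb k = -xb i :=
          eq_neg_of_add_eq_zero_right h3
        rw [h1, h2, h4, sub_eq_add_neg]
      have hDsum : (∑ k, D k (y k)) =
          D i x + ((∑ k ∈ Finset.univ.erase i, d k : ℝ) : EReal) := by
        rw [← Finset.add_sum_erase _ (fun k => D k (y k)) (Finset.mem_univ i)]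
        have h1 : D i (y i) = D i x := by rw [hy, Function.update_self]
        have h2 : (∑ k ∈ Finset.univ.erase i, D k (y k))
            = ∑ k ∈ Finset.univ.erase i, D k (xb k) :=
          Finset.sum_congr rfl fun k hk => by
            rw [hy, Function.update_of_ne (Finset.mem_erase.mp hk).1 x xb]
        rw [h1, h2]
        congr 1
        exact sum_eq_coe_toReal (fun k _ => hne_top k _) (fun k _ => hbot k)
      have hle1 : (∑ k, D k (y k)) ≤ marketValue D (x - xb i) :=
        le_sSup ⟨y, hysum, rfl⟩
      have hle2 := le_trans hle1 (hvb (x - xb i))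
      rw [hDsum] at hle2
      set r : ℝ := (D i x).toReal with hrdef
      have hDx : D i x = (r : EReal) := (EReal.coe_toReal (hne_top i x) hxb).symm
      rw [hDx, ← EReal.coe_add] at hle2
      have hreal : r + ∑ k ∈ Finset.univ.erase i, d k ≤ v0 + dotp p (x - xb i) :=
        EReal.coe_le_coe_iff.mp hle2
      have hv0split : v0 = d i + ∑ k ∈ Finset.univ.erase i, d k := by
        rw [hv0, ← Finset.add_sum_erase _ d (Finset.mem_univ i)]
      have hfin : r ≤ d i + dotp p (x - xb i) := by linarith
      rw [hDx, show D i (xb i) = ((d i : ℝ) : EReal) from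
        (EReal.coe_toReal (hne_top i _) (hbot i)).symm, ← EReal.coe_add]
      exact EReal.coe_le_coe_iff.mpr hfin
  · -- backward direction
    rintro ⟨p, hp⟩
    have hbot : ∀ i, D i (xb i) ≠ ⊥ := fun i => (hp i).1
    set d : I → ℝ := fun i => (D i (xb i)).toReal with hd
    have hsum : (∑ i, D i (xb i)) = ((∑ i, d i : ℝ) : EReal) :=
      sum_eq_coe_toReal (fun i _ => hne_top i _) (fun i _ => hbot i)
    apply le_antisymm
    · exact le_sSup ⟨xb, hfeas, rfl⟩
    · apply sSup_le
      rintro e ⟨x, hx, rfl⟩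
      have hi : ∀ i, D i (x i) ≤ ((d i + dotp p (x i - xb i) : ℝ) : EReal) := by
        intro i
        have h := (hp i).2.2 (x i)
        rwa [show D i (xb i) = ((d i : ℝ) : EReal) from
          (EReal.coe_toReal (hne_top i _) (hbot i)).symm, ← EReal.coe_add] at h
      calc (∑ i, D i (x i)) ≤ ∑ i, ((d i + dotp p (x i - xb i) : ℝ) : EReal) :=
            Finset.sum_le_sum fun i _ => hi i
        _ = ((∑ i, (d i + dotp p (x i - xb i)) : ℝ) : EReal) := (coe_sumE _ _).symm
        _ = ((∑ i, d i : ℝ) : EReal) := by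
            congr 1
            rw [Finset.sum_add_distrib, ← dotp_sum]
            have hzero : (∑ i, (x i - xb i)) = 0 := by
              rw [Finset.sum_sub_distrib, hx, hfeas, sub_zero]
            rw [hzero, dotp_zero, add_zero]
        _ = ∑ i, D i (xb i) := hsum.symm
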